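/- For every SGF-quantale Q, the quotient of the incidence domain I = {(p,f) : p prime in Q_e, d(f) ≰ p} by the incidence relation, with structure maps d([p,f]) = p, r([p,f]) = f[p], u(p) = [p,e], [p,f]·[f[p],g] = [p,f·g], and [p,f]⁻¹ = [f[p],f*], is a set groupoid. -/

import Mathlib

/-- A unital involutive quantale. The multiplicative unit `1` plays the role of `e`. -/
class UIQuantale (Q : Type*) extends CompleteLattice Q, Monoid Q, StarMul Q where
  mul_sSup : ∀ (a : Q) (s : Set Q), a * sSup s = ⨆ b ∈ s, a * b
  sSup_mul : ∀ (a : Q) (s : Set Q), sSup s * a = ⨆ b ∈ s, b * a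
  star_sSup : ∀ (s : Set Q), star (sSup s) = ⨆ b ∈ s, star b

namespace SGFaux
variable {Q : Type*} [UIQuantale Q]

lemma mul_sup (a b c : Q) : a * (b ⊔ c) = a * b ⊔ a * c := by
  rw [← sSup_pair, UIQuantale.mul_sSup, iSup_pair]

lemma sup_mul (a b c : Q) : (b ⊔ c) * a = b * a ⊔ c * a := by
  rw [← sSup_pair, UIQuantale.sSup_mul, iSup_pair]

lemma star_sup (b c : Q) : star (b ⊔ c) = star b ⊔ star c := by
  rw [← sSup_pair, UIQuantale.star_sSup, iSup_pair]

lemma mul_le_mul {a b c d : Q} (h1 : a ≤ b) (h2 : c ≤ d) : a * c ≤ b * d := by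
  have h3 : b * (c ⊔ d) = b * c ⊔ b * d := mul_sup b c d
  have h4 : (a ⊔ b) * c = a * c ⊔ b * c := sup_mul c a b
  rw [sup_eq_right.2 h2] at h3
  rw [sup_eq_right.2 h1] at h4
  calc a * c ≤ b * c := by rw [h4]; exact le_sup_left
    _ ≤ b * d := by rw [h3]; exact le_sup_left

lemma star_mono {a b : Q} (h : a ≤ b) : star a ≤ star b := by
  have := star_sup a b
  rw [sup_eq_right.2 h] at this
  exact this ▸ le_sup_left

end SGFaux

/-- A partial unit: both `f` and `star f` are functional. -/
def IsPU {Q : Type*} [UIQuantale Q] (f : Q) : Prop :=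
  star f * f ≤ 1 ∧ f * star f ≤ 1

/-- A prime element of `Q_e`. -/
def IsPrimeE {Q : Type*} [UIQuantale Q] (p : Q) : Prop :=
  p ≤ 1 ∧ p ≠ 1 ∧ ∀ h k : Q, h ≤ 1 → k ≤ 1 → h ⊓ k ≤ p → h ≤ p ∨ k ≤ p

/-- An SGF-quantale: a unital involutive quantale which is join-generated by its
partial units (SGF1), satisfies `f = f f* f` for partial units (SGF2), and the
separation axiom SGF3. -/
class SGFQuantale (Q : Type*) extends UIQuantale Q where
  sgf1 : ∀ a : Q, a = sSup {f | IsPU f ∧ f ≤ a}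
  sgf2 : ∀ f : Q, IsPU f → f * star f * f = f
  sgf3 : ∀ f g h : Q, IsPU f → IsPU g → h ≤ 1 → f ≤ h * ⊤ ⊔ g → f ≤ h * f ⊔ g

namespace SGFaux
variable {Q : Type*} [UIQuantale Q]

lemma mul_bot (a : Q) : a * (⊥ : Q) = ⊥ := by
  have := UIQuantale.mul_sSup a (∅ : Set Q)
  simpa using this

lemma star_bot : star (⊥ : Q) = (⊥ : Q) := by
  have := UIQuantale.star_sSup (∅ : Set Q)
  simpa using this

lemma pu_bot : IsPU (⊥ : Q) := by
  constructor <;> · rw [star_bot, mul_bot]; exact bot_le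

lemma pu_one : IsPU (1 : Q) := by
  constructor <;> simp

lemma pu_star {f : Q} (hf : IsPU f) : IsPU (star f) := by
  refine ⟨?_, ?_⟩ <;> rw [star_star]
  exacts [hf.2, hf.1]

lemma pu_mul {f g : Q} (hf : IsPU f) (hg : IsPU g) : IsPU (f * g) := by
  constructor
  · rw [star_mul]
    calc star g * star f * (f * g) = star g * (star f * f) * g := by
          simp [_root_.mul_assoc]
      _ ≤ star g * 1 * g := mul_le_mul (mul_le_mul le_rfl hf.1) le_rfl
      _ = star g * g := by rw [mul_one]
      _ ≤ 1 := hg.1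
  · rw [star_mul]
    calc f * g * (star g * star f) = f * (g * star g) * star f := by
          simp [_root_.mul_assoc]
      _ ≤ f * 1 * star f := mul_le_mul (mul_le_mul le_rfl hg.2) le_rfl
      _ = f * star f := by rw [mul_one]
      _ ≤ 1 := hf.2

lemma pu_of_le_one {a : Q} (ha : a ≤ 1) : IsPU a := by
  have h1 : star a ≤ 1 := by simpa using star_mono ha
  constructor
  · calc star a * a ≤ 1 * 1 := mul_le_mul h1 ha
      _ = 1 := by rw [mul_one]
  · calc a * star a ≤ 1 * 1 := mul_le_mul ha h1
      _ = 1 := by rw [mul_one]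

end SGFaux

namespace SGFaux
variable {Q : Type*} [SGFQuantale Q]

/-- partial units below `1` are self-adjoint. -/
lemma pu_star_self {f : Q} (hf : IsPU f) (h1 : f ≤ 1) : star f = f := by
  have hs1 : star f ≤ 1 := by simpa using star_mono h1
  have key : ∀ g : Q, IsPU g → g ≤ 1 → g ≤ star g := by
    intro g hg hgle
    calc g = g * star g * g := (SGFQuantale.sgf2 g hg).symm
      _ ≤ 1 * star g * 1 := mul_le_mul (mul_le_mul hgle le_rfl) hgle
      _ = star g := by rw [one_mul, mul_one]
  have h2 := key f hf h1
  have h3 := key (star f) (pu_star hf) hs1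
  rw [star_star] at h3
  exact le_antisymm h3 h2

/-- elements below `1` are self-adjoint. -/
lemma star_self_of_le_one {a : Q} (ha : a ≤ 1) : star a = a := by
  conv_lhs => rw [SGFQuantale.sgf1 a]
  rw [UIQuantale.star_sSup]
  conv_rhs => rw [SGFQuantale.sgf1 a]
  apply le_antisymm
  · apply iSup₂_le
    intro f hf
    rw [pu_star_self hf.1 (le_trans hf.2 ha)]
    exact le_sSup hf
  · apply sSup_le
    intro f hf
    have : star f = f := pu_star_self hf.1 (le_trans hf.2 ha)
    calc f = star f := this.symm
      _ ≤ ⨆ b ∈ {f | IsPU f ∧ f ≤ a}, star b :=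
        le_iSup₂ (f := fun b (_ : b ∈ {f | IsPU f ∧ f ≤ a}) => star b) f hf

/-- elements below `1` are idempotent. -/
lemma idem_of_le_one {a : Q} (ha : a ≤ 1) : a * a = a := by
  apply le_antisymm
  · calc a * a ≤ 1 * a := mul_le_mul ha le_rfl
      _ = a := one_mul a
  · conv_lhs => rw [SGFQuantale.sgf1 a]
    apply sSup_le
    intro f hf
    have hfle : f ≤ 1 := le_trans hf.2 ha
    have hidem : f * f = f := by
      have h2 := SGFQuantale.sgf2 f hf.1
      rw [pu_star_self hf.1 hfle] at h2
      have hle : f * f ≤ f := by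
        calc f * f ≤ 1 * f := mul_le_mul hfle le_rfl
          _ = f := one_mul f
      have : f ≤ f * f := by
        calc f = f * f * f := h2.symm
          _ ≤ f * f * 1 := mul_le_mul le_rfl hfle
          _ = f * f := mul_one _
      exact le_antisymm hle this
    calc f = f * f := hidem.symm
      _ ≤ a * a := mul_le_mul hf.2 hf.2

/-- multiplication is meet on subidentities. -/
lemma mul_eq_inf {a b : Q} (ha : a ≤ 1) (hb : b ≤ 1) : a * b = a ⊓ b := by
  apply le_antisymm
  · apply le_inf
    · calc a * b ≤ a * 1 := mul_le_mul le_rfl hb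
        _ = a := mul_one a
    · calc a * b ≤ 1 * b := mul_le_mul ha le_rfl
        _ = b := one_mul b
  · calc a ⊓ b = (a ⊓ b) * (a ⊓ b) := (idem_of_le_one (le_trans inf_le_left ha)).symm
      _ ≤ a * b := mul_le_mul inf_le_left inf_le_right

lemma mul_comm_sub {a b : Q} (ha : a ≤ 1) (hb : b ≤ 1) : a * b = b * a := by
  rw [mul_eq_inf ha hb, mul_eq_inf hb ha, inf_comm]

lemma mul_mul_self_sub {a b : Q} (ha : a ≤ 1) (hb : b ≤ 1) : a * b * a = a ⊓ b := by
  rw [mul_eq_inf ha hb, mul_eq_inf (le_trans inf_le_left ha) ha]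
  rw [inf_assoc, inf_comm b a, ← inf_assoc, inf_idem]

end SGFaux

namespace SGFaux
variable {Q : Type*} [SGFQuantale Q]

lemma mul_le_left {p x : Q} (hx : x ≤ 1) : p * x ≤ p := by
  calc p * x ≤ p * 1 := mul_le_mul le_rfl hx
    _ = p := mul_one p

lemma mul_le_right {p x : Q} (hx : x ≤ 1) : x * p ≤ p := by
  calc x * p ≤ 1 * p := mul_le_mul hx le_rfl
    _ = p := one_mul p

/-- `d f · f = f` for a partial unit. -/
lemma d_mul_self {f : Q} (hf : IsPU f) : f * star f * f = f := SGFQuantale.sgf2 f hf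

lemma self_mul_r {f : Q} (hf : IsPU f) : f * (star f * f) = f := by
  rw [← _root_.mul_assoc]; exact SGFQuantale.sgf2 f hf

/-- the image point `f[p]`. -/
def fpt (p f : Q) : Q := sSup {a | a ≤ 1 ∧ f * a ≤ p * f}

lemma fpt_le_one (p f : Q) : fpt p f ≤ 1 := sSup_le (fun a ha => ha.1)

lemma mul_fpt {p f : Q} (hp : p ≤ 1) (hf : IsPU f) : f * fpt p f = p * f := by
  apply le_antisymm
  · rw [fpt, UIQuantale.mul_sSup]
    exact iSup₂_le (fun a ha => ha.2)
  · have ha0 : star f * p * f ∈ {a | a ≤ 1 ∧ f * a ≤ p * f} := by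
      constructor
      · calc star f * p * f ≤ star f * 1 * f := mul_le_mul (mul_le_mul le_rfl hp) le_rfl
          _ = star f * f := by rw [mul_one]
          _ ≤ 1 := hf.1
      · calc f * (star f * p * f) = f * star f * (p * f) := by simp [_root_.mul_assoc]
          _ ≤ 1 * (p * f) := mul_le_mul hf.2 le_rfl
          _ = p * f := one_mul _
    calc p * f = p * (f * star f * f) := by rw [d_mul_self hf]
      _ = p * (f * star f) * f := by simp [_root_.mul_assoc]
      _ = (f * star f) * p * f := by rw [mul_comm_sub hp hf.2]
      _ = f * (star f * p * f) := by simp [_root_.mul_assoc]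
      _ ≤ f * fpt p f := mul_le_mul le_rfl (le_sSup ha0)

lemma mul_le_iff_conj {p f a : Q} (hp : p ≤ 1) (hf : IsPU f) (ha : a ≤ 1) :
    f * a ≤ p * f ↔ f * a * star f ≤ p := by
  constructor
  · intro h
    calc f * a * star f ≤ p * f * star f := mul_le_mul h le_rfl
      _ = p * (f * star f) := _root_.mul_assoc _ _ _
      _ ≤ p := mul_le_left hf.2
  · intro h
    have key : f * a = f * a * star f * f := by
      calc f * a = f * (star f * f) * a := by rw [self_mul_r hf]
        _ = f * ((star f * f) * a) := by rw [_root_.mul_assoc]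
        _ = f * (a * (star f * f)) := by
            rw [mul_comm_sub (hf.1) ha]
        _ = f * a * (star f * f) := by rw [← _root_.mul_assoc]
        _ = f * a * star f * f := by rw [← _root_.mul_assoc]
    calc f * a = f * a * star f * f := key
      _ ≤ p * f := mul_le_mul h le_rfl

lemma le_fpt_iff {p f a : Q} (hp : p ≤ 1) (hf : IsPU f) (ha : a ≤ 1) :
    a ≤ fpt p f ↔ f * a * star f ≤ p := by
  constructor
  · intro h
    rw [← mul_le_iff_conj hp hf ha]
    calc f * a ≤ f * fpt p f := mul_le_mul le_rfl h
      _ = p * f := mul_fpt hp hf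
  · intro h
    exact le_sSup ⟨ha, (mul_le_iff_conj hp hf ha).2 h⟩

lemma r_not_le_fpt {p f : Q} (hp : p ≤ 1) (hf : IsPU f) (hd : ¬ f * star f ≤ p) :
    ¬ star f * f ≤ fpt p f := by
  intro h
  apply hd
  have h1 : f ≤ p * f := by
    calc f = f * (star f * f) := (self_mul_r hf).symm
      _ ≤ f * fpt p f := mul_le_mul le_rfl h
      _ = p * f := mul_fpt hp hf
  calc f * star f ≤ p * f * star f := mul_le_mul h1 le_rfl
    _ = p * (f * star f) := _root_.mul_assoc _ _ _
    _ ≤ p := mul_le_left hf.2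

lemma fpt_prime {p f : Q} (hp : IsPrimeE p) (hf : IsPU f) (hd : ¬ f * star f ≤ p) :
    IsPrimeE (fpt p f) := by
  refine ⟨fpt_le_one p f, ?_, ?_⟩
  · intro h1
    exact r_not_le_fpt hp.1 hf hd (h1 ▸ hf.1)
  · intro h k hh hk hhk
    have hconj : ∀ b : Q, b ≤ 1 → f * b * star f ≤ 1 := by
      intro b hb
      calc f * b * star f ≤ f * 1 * star f := mul_le_mul (mul_le_mul le_rfl hb) le_rfl
        _ = f * star f := by rw [mul_one]
        _ ≤ 1 := hf.2
    have hmeet : (f * h * star f) ⊓ (f * k * star f) ≤ p := by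
      calc (f * h * star f) ⊓ (f * k * star f)
          = (f * h * star f) * (f * k * star f) :=
            (mul_eq_inf (hconj h hh) (hconj k hk)).symm
        _ = f * (h * (star f * f) * k) * star f := by simp [_root_.mul_assoc]
        _ ≤ f * (h * 1 * k) * star f :=
            mul_le_mul (mul_le_mul le_rfl (mul_le_mul (mul_le_mul le_rfl hf.1) le_rfl)) le_rfl
        _ = f * (h * k) * star f := by rw [mul_one]
        _ = f * (h ⊓ k) * star f := by rw [mul_eq_inf hh hk]
        _ ≤ f * fpt p f * star f := mul_le_mul (mul_le_mul le_rfl hhk) le_rfl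
        _ = p * f * star f := by rw [mul_fpt hp.1 hf]
        _ = p * (f * star f) := _root_.mul_assoc _ _ _
        _ ≤ p := mul_le_left hf.2
    rcases hp.2.2 _ _ (hconj h hh) (hconj k hk) hmeet with h1 | h1
    · exact Or.inl ((le_fpt_iff hp.1 hf hh).2 h1)
    · exact Or.inr ((le_fpt_iff hp.1 hf hk).2 h1)

lemma fpt_unique {p f q : Q} (hp : IsPrimeE p) (hf : IsPU f) (hd : ¬ f * star f ≤ p)
    (hq : IsPrimeE q) (heq : p * f = f * q) : fpt p f = q := by
  have hrq : ¬ star f * f ≤ q := by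
    intro h
    apply hd
    have h1 : f ≤ p * f := by
      calc f = f * (star f * f) := (self_mul_r hf).symm
        _ ≤ f * q := mul_le_mul le_rfl h
        _ = p * f := heq.symm
    calc f * star f ≤ p * f * star f := mul_le_mul h1 le_rfl
      _ = p * (f * star f) := _root_.mul_assoc _ _ _
      _ ≤ p := mul_le_left hf.2
  apply le_antisymm
  · apply sSup_le
    intro a ha
    have h2 : (star f * f) * a ≤ (star f * f) * q := by
      calc (star f * f) * a = star f * (f * a) := _root_.mul_assoc _ _ _
        _ ≤ star f * (p * f) := mul_le_mul le_rfl ha.2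
        _ = star f * (f * q) := by rw [heq]
        _ = (star f * f) * q := (_root_.mul_assoc _ _ _).symm
    have h3 : (star f * f) ⊓ a ≤ q := by
      calc (star f * f) ⊓ a = (star f * f) * a := (mul_eq_inf hf.1 ha.1).symm
        _ ≤ (star f * f) * q := h2
        _ ≤ q := mul_le_right hf.1
    rcases hq.2.2 _ _ hf.1 ha.1 h3 with h4 | h4
    · exact absurd h4 hrq
    · exact h4
  · exact le_sSup ⟨hq.1, heq ▸ le_rfl⟩

end SGFaux

/-- The incidence relation: `f` and `g` are incident at `p` if some `h ≤ d(f) ⊓ d(g)`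
with `h ≰ p` satisfies `h f ≤ p f ⊔ g`. -/
def Incident {Q : Type*} [SGFQuantale Q] (p f g : Q) : Prop :=
  ∃ h : Q, h ≤ (f * star f) ⊓ (g * star g) ∧ ¬ h ≤ p ∧ h * f ≤ p * f ⊔ g

namespace SGFaux
variable {Q : Type*} [SGFQuantale Q]

lemma conj_le_one {f b : Q} (hf : IsPU f) (hb : b ≤ 1) : f * b * star f ≤ 1 := by
  calc f * b * star f ≤ f * 1 * star f := mul_le_mul (mul_le_mul le_rfl hb) le_rfl
    _ = f * star f := by rw [mul_one]
    _ ≤ 1 := hf.2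

lemma h_le_p_sup {p f g h : Q} (hp : p ≤ 1) (hf : IsPU f)
    (hhd : h ≤ f * star f) (hfg : h * f ≤ p * f ⊔ g) : h ≤ p ⊔ g * star f := by
  have hh1 : h ≤ 1 := le_trans hhd hf.2
  calc h = h ⊓ (f * star f) := (inf_eq_left.2 hhd).symm
    _ = h * (f * star f) := (mul_eq_inf hh1 hf.2).symm
    _ = (h * f) * star f := by rw [_root_.mul_assoc]
    _ ≤ (p * f ⊔ g) * star f := mul_le_mul hfg le_rfl
    _ = p * f * star f ⊔ g * star f := sup_mul _ _ _
    _ ≤ p ⊔ g * star f := by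
        apply sup_le_sup_right
        calc p * f * star f = p * (f * star f) := _root_.mul_assoc _ _ _
          _ ≤ p := mul_le_left hf.2

lemma incident_symm_aux {p f g h : Q} (hp : p ≤ 1) (hf : IsPU f) (hg : IsPU g)
    (hhd : h ≤ f * star f) (hfg : h * f ≤ p * f ⊔ g) : h * g ≤ p * g ⊔ f := by
  have hh1 : h ≤ 1 := le_trans hhd hf.2
  have h1 : h ≤ p ⊔ g * star f := h_le_p_sup hp hf hhd hfg
  have h2 : star g * h ≤ star g * p ⊔ star f := by
    calc star g * h ≤ star g * (p ⊔ g * star f) := mul_le_mul le_rfl h1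
      _ = star g * p ⊔ star g * (g * star f) := mul_sup _ _ _
      _ ≤ star g * p ⊔ star f := by
          apply sup_le_sup_left
          calc star g * (g * star f) = (star g * g) * star f := (_root_.mul_assoc _ _ _).symm
            _ ≤ 1 * star f := mul_le_mul hg.1 le_rfl
            _ = star f := one_mul _
  have h3 := star_mono h2
  rw [star_mul, star_sup, star_mul, star_star, star_star,
    star_self_of_le_one hh1, star_self_of_le_one hp] at h3
  exact h3

lemma sub_le_of_le_ptop {p x : Q} (hp : p ≤ 1) (hx : x ≤ 1) (h : x ≤ p * ⊤) : x ≤ p := by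
  have h1 := SGFQuantale.sgf3 x ⊥ p (pu_of_le_one hx) pu_bot hp (by rw [sup_bot_eq]; exact h)
  rw [sup_bot_eq] at h1
  calc x ≤ p * x := h1
    _ ≤ p := mul_le_left hx

lemma pu_le_ptop_of_d_le {p v : Q} (hv : IsPU v) (hd : v * star v ≤ p) : v ≤ p * ⊤ := by
  calc v = v * star v * v := (d_mul_self hv).symm
    _ ≤ p * ⊤ := mul_le_mul hd le_top

/-- the transfer lemma: incident partial units have the same local behaviour at `p`. -/
lemma transfer {p f g h a : Q} (hp : IsPrimeE p) (hf : IsPU f) (hg : IsPU g)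
    (hhd : h ≤ f * star f) (hhp : ¬ h ≤ p) (hfg : h * f ≤ p * f ⊔ g)
    (ha : a ≤ 1) (hfa : f * a * star f ≤ p) : g * a * star g ≤ p := by
  have hh1 : h ≤ 1 := le_trans hhd hf.2
  have hga1 : g * a * star g ≤ 1 := conj_le_one hg ha
  have hsym : h * g ≤ p * g ⊔ f := incident_symm_aux hp.1 hf hg hhd hfg
  have hstar : star g * h ≤ star g * p ⊔ star f := by
    have h3 := star_mono hsym
    rw [star_mul, star_sup, star_mul, star_self_of_le_one hh1,
      star_self_of_le_one hp.1] at h3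
    exact h3
  -- the element v = f * a * star g * p is a partial unit with domain inside p
  have hm : star g * p * g ≤ 1 := by
    calc star g * p * g ≤ star g * 1 * g := mul_le_mul (mul_le_mul le_rfl hp.1) le_rfl
      _ = star g * g := by rw [mul_one]
      _ ≤ 1 := hg.1
  have hv_d : (f * a * star g * p) * star (f * a * star g * p) ≤ p := by
    have hrw : star (f * a * star g * p) = p * (g * (a * star f)) := by
      simp [star_mul, star_star, star_self_of_le_one hp.1, star_self_of_le_one ha,
        _root_.mul_assoc]
    rw [hrw]
    have : (f * a * star g * p) * (p * (g * (a * star f)))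
        = f * (a * (star g * p * p * g) * a) * star f := by
      simp [_root_.mul_assoc]
    rw [this]
    have hmid : star g * p * p * g ≤ 1 := by
      calc star g * p * p * g ≤ star g * p * 1 * g :=
            mul_le_mul (mul_le_mul le_rfl hp.1) le_rfl
        _ = star g * p * g := by rw [mul_one]
        _ ≤ 1 := hm
    calc f * (a * (star g * p * p * g) * a) * star f
        ≤ f * (a * 1 * 1) * star f :=
          mul_le_mul (mul_le_mul le_rfl (mul_le_mul (mul_le_mul le_rfl hmid) ha)) le_rfl
      _ = f * a * star f := by rw [mul_one, mul_one]
      _ ≤ p := hfa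
  have hv_pu : IsPU (f * a * star g * p) := by
    constructor
    · have hrw : star (f * a * star g * p) * (f * a * star g * p)
          = p * (g * (a * (star f * f) * a) * star g) * p := by
        simp [star_mul, star_star, star_self_of_le_one hp.1, star_self_of_le_one ha,
          _root_.mul_assoc]
      rw [hrw]
      have hmid : a * (star f * f) * a ≤ 1 := by
        calc a * (star f * f) * a ≤ 1 * 1 * 1 :=
            mul_le_mul (mul_le_mul ha hf.1) ha
          _ = 1 := by simp
      calc p * (g * (a * (star f * f) * a) * star g) * p
          ≤ p * 1 * p := mul_le_mul (mul_le_mul le_rfl (conj_le_one hg hmid)) le_rfl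
        _ = p * p := by rw [mul_one]
        _ ≤ 1 * 1 := mul_le_mul hp.1 hp.1
        _ = 1 := by simp
    · exact le_trans hv_d hp.1
  -- now bound x = h ⊓ (g a g*) by p ⊤
  set x := h * (g * a * star g) * h with hxdef
  have hx1 : x ≤ 1 := by
    calc x ≤ 1 * 1 * 1 := mul_le_mul (mul_le_mul hh1 hga1) hh1
      _ = 1 := by simp
  have hxsplit : x = (h * g) * a * (star g * h) := by
    simp [hxdef, _root_.mul_assoc]
  have t1 : p * g * a * (star g * p) ≤ p * ⊤ := by
    have e : p * g * a * (star g * p) = p * (g * a * (star g * p)) := by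
      simp [_root_.mul_assoc]
    rw [e]; exact mul_le_mul le_rfl le_top
  have t2 : p * g * a * star f ≤ p * ⊤ := by
    have e : p * g * a * star f = p * (g * a * star f) := by
      simp [_root_.mul_assoc]
    rw [e]; exact mul_le_mul le_rfl le_top
  have t3 : f * a * (star g * p) ≤ p * ⊤ := by
    have e : f * a * (star g * p) = f * a * star g * p := by
      simp [_root_.mul_assoc]
    rw [e]; exact pu_le_ptop_of_d_le hv_pu hv_d
  have t4 : f * a * star f ≤ p * ⊤ := by
    calc f * a * star f ≤ p := hfa
      _ = p * 1 := (mul_one p).symm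
      _ ≤ p * ⊤ := mul_le_mul le_rfl le_top
  have hbound : x ≤ p * ⊤ := by
    rw [hxsplit]
    calc (h * g) * a * (star g * h)
        ≤ (p * g ⊔ f) * a * (star g * p ⊔ star f) :=
          mul_le_mul (mul_le_mul hsym le_rfl) hstar
      _ = (p * g * a ⊔ f * a) * (star g * p ⊔ star f) := by rw [sup_mul]
      _ = p * g * a * (star g * p) ⊔ p * g * a * star f
          ⊔ (f * a * (star g * p) ⊔ f * a * star f) := by
          rw [sup_mul, mul_sup, mul_sup]
      _ ≤ p * ⊤ := sup_le (sup_le t1 t2) (sup_le t3 t4)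
  have hxp : x ≤ p := sub_le_of_le_ptop hp.1 hx1 hbound
  have hinf : h ⊓ (g * a * star g) ≤ p := by
    rw [← mul_mul_self_sub hh1 hga1]
    exact hxp
  rcases hp.2.2 _ _ hh1 hga1 hinf with h1 | h1
  · exact absurd h1 hhp
  · exact h1

/-- incident pairs have the same image point. -/
lemma fpt_eq_of_incident {p f g : Q} (hp : IsPrimeE p) (hf : IsPU f) (hg : IsPU g)
    (hdf : ¬ f * star f ≤ p) (hdg : ¬ g * star g ≤ p)
    (hinc : Incident p f g) : fpt p f = fpt p g := by
  obtain ⟨h, hhd, hhp, hfg⟩ := hinc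
  have hhd1 : h ≤ f * star f := le_trans hhd inf_le_left
  have hhd2 : h ≤ g * star g := le_trans hhd inf_le_right
  have hh1 : h ≤ 1 := le_trans hhd1 hf.2
  have hsym : h * g ≤ p * g ⊔ f := incident_symm_aux hp.1 hf hg hhd1 hfg
  apply le_antisymm
  · rw [le_fpt_iff hp.1 hg (fpt_le_one p f)]
    exact transfer hp hf hg hhd1 hhp hfg (fpt_le_one p f)
      ((le_fpt_iff hp.1 hf (fpt_le_one p f)).1 le_rfl)
  · rw [le_fpt_iff hp.1 hf (fpt_le_one p g)]
    exact transfer hp hg hf hhd2 hhp hsym (fpt_le_one p g)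
      ((le_fpt_iff hp.1 hg (fpt_le_one p g)).1 le_rfl)

end SGFaux

namespace SGFaux
variable {Q : Type*} [SGFQuantale Q]

lemma d_mul_not_le {p f g : Q} (hp : IsPrimeE p) (hf : IsPU f) (hg : IsPU g)
    (hdf : ¬ f * star f ≤ p) (hdg : ¬ g * star g ≤ fpt p f) :
    ¬ (f * g) * star (f * g) ≤ p := by
  intro hle
  apply hdg
  have ha : (star f * f) * (g * star g) ≤ 1 := by
    calc (star f * f) * (g * star g) ≤ 1 * 1 := mul_le_mul hf.1 hg.2
      _ = 1 := by simp
  have hconj : f * ((star f * f) * (g * star g)) * star f ≤ p := by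
    have e : f * ((star f * f) * (g * star g)) * star f = (f * g) * star (f * g) := by
      rw [star_mul]
      calc f * ((star f * f) * (g * star g)) * star f
          = (f * (star f * f)) * (g * (star g * star f)) := by simp [_root_.mul_assoc]
        _ = f * (g * (star g * star f)) := by rw [self_mul_r hf]
        _ = f * g * (star g * star f) := by rw [_root_.mul_assoc]
    rw [e]
    exact hle
  have h1 : (star f * f) * (g * star g) ≤ fpt p f :=
    (le_fpt_iff hp.1 hf ha).2 hconj
  have h2 : (star f * f) ⊓ (g * star g) ≤ fpt p f := by
    rw [← mul_eq_inf hf.1 hg.2]; exact h1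
  rcases (fpt_prime hp hf hdf).2.2 _ _ hf.1 hg.2 h2 with h3 | h3
  · exact absurd h3 (r_not_le_fpt hp.1 hf hdf)
  · exact h3

lemma fpt_mul {p f g : Q} (hp : IsPrimeE p) (hf : IsPU f) (hg : IsPU g)
    (hdf : ¬ f * star f ≤ p) (hdg : ¬ g * star g ≤ fpt p f) :
    fpt p (f * g) = fpt (fpt p f) g := by
  have hq := fpt_prime hp hf hdf
  have hs := fpt_prime hq hg hdg
  apply fpt_unique hp (pu_mul hf hg) (d_mul_not_le hp hf hg hdf hdg) hs
  calc p * (f * g) = (p * f) * g := (_root_.mul_assoc _ _ _).symm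
    _ = (f * fpt p f) * g := by rw [mul_fpt hp.1 hf]
    _ = f * (fpt p f * g) := _root_.mul_assoc _ _ _
    _ = f * (g * fpt (fpt p f) g) := by rw [mul_fpt hq.1 hg]
    _ = (f * g) * fpt (fpt p f) g := (_root_.mul_assoc _ _ _).symm

lemma prime_not_le_inf {p a b : Q} (hp : IsPrimeE p) (ha : a ≤ 1) (hb : b ≤ 1)
    (hna : ¬ a ≤ p) (hnb : ¬ b ≤ p) : ¬ a ⊓ b ≤ p := by
  intro h
  rcases hp.2.2 a b ha hb h with h1 | h1
  · exact hna h1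
  · exact hnb h1

lemma compatA {p f f' g : Q} (hp : IsPrimeE p) (hf : IsPU f) (hf' : IsPU f') (hg : IsPU g)
    (hdf : ¬ f * star f ≤ p) (hdf' : ¬ f' * star f' ≤ p)
    (hdg : ¬ g * star g ≤ fpt p f) (hdg' : ¬ g * star g ≤ fpt p f')
    (hinc : Incident p f f') : Incident p (f * g) (f' * g) := by
  obtain ⟨h, hhd, hhp, hfg⟩ := hinc
  have hh1 : h ≤ 1 := le_trans (le_trans hhd inf_le_left) hf.2
  have hD1 : ¬ (f * g) * star (f * g) ≤ p := d_mul_not_le hp hf hg hdf hdg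
  have hD2 : ¬ (f' * g) * star (f' * g) ≤ p := d_mul_not_le hp hf' hg hdf' hdg'
  have hd1le : (f * g) * star (f * g) ≤ 1 := (pu_mul hf hg).2
  have hd2le : (f' * g) * star (f' * g) ≤ 1 := (pu_mul hf' hg).2
  refine ⟨h ⊓ ((f * g) * star (f * g)) ⊓ ((f' * g) * star (f' * g)), ?_, ?_, ?_⟩
  · exact le_inf (le_trans inf_le_left inf_le_right) inf_le_right
  · intro hle
    have : h ⊓ (((f * g) * star (f * g)) ⊓ ((f' * g) * star (f' * g))) ≤ p := by
      rw [← inf_assoc]; exact hle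
    rcases hp.2.2 _ _ hh1 (le_trans inf_le_left hd1le) this with h1 | h1
    · exact hhp h1
    · exact prime_not_le_inf hp hd1le hd2le hD1 hD2 h1
  · calc (h ⊓ ((f * g) * star (f * g)) ⊓ ((f' * g) * star (f' * g))) * (f * g)
        ≤ h * (f * g) := mul_le_mul (le_trans inf_le_left inf_le_left) le_rfl
      _ = (h * f) * g := (_root_.mul_assoc _ _ _).symm
      _ ≤ (p * f ⊔ f') * g := mul_le_mul hfg le_rfl
      _ = p * f * g ⊔ f' * g := sup_mul _ _ _
      _ = p * (f * g) ⊔ f' * g := by rw [_root_.mul_assoc]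

lemma compatB {p f g g' : Q} (hp : IsPrimeE p) (hf : IsPU f) (hg : IsPU g) (hg' : IsPU g')
    (hdf : ¬ f * star f ≤ p)
    (hinc : Incident (fpt p f) g g') : Incident p (f * g) (f * g') := by
  obtain ⟨h, hhd, hhq, hgg'⟩ := hinc
  have hh1 : h ≤ 1 := le_trans (le_trans hhd inf_le_left) hg.2
  refine ⟨f * h * star f, ?_, ?_, ?_⟩
  · apply le_inf
    · have e : (f * g) * star (f * g) = f * (g * star g) * star f := by
        rw [star_mul]; simp [_root_.mul_assoc]
      rw [e]
      exact mul_le_mul (mul_le_mul le_rfl (le_trans hhd inf_le_left)) le_rfl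
    · have e : (f * g') * star (f * g') = f * (g' * star g') * star f := by
        rw [star_mul]; simp [_root_.mul_assoc]
      rw [e]
      exact mul_le_mul (mul_le_mul le_rfl (le_trans hhd inf_le_right)) le_rfl
  · intro hle
    exact hhq ((le_fpt_iff hp.1 hf hh1).2 hle)
  · calc (f * h * star f) * (f * g) = f * h * (star f * f) * g := by simp [_root_.mul_assoc]
      _ ≤ f * h * 1 * g := mul_le_mul (mul_le_mul le_rfl hf.1) le_rfl
      _ = f * (h * g) := by rw [mul_one, _root_.mul_assoc]
      _ ≤ f * (fpt p f * g ⊔ g') := mul_le_mul le_rfl hgg'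
      _ = f * (fpt p f * g) ⊔ f * g' := mul_sup _ _ _
      _ = (f * fpt p f) * g ⊔ f * g' := by rw [_root_.mul_assoc]
      _ = (p * f) * g ⊔ f * g' := by rw [mul_fpt hp.1 hf]
      _ = p * (f * g) ⊔ f * g' := by rw [_root_.mul_assoc]

lemma star_mul_p {p f : Q} (hp : IsPrimeE p) (hf : IsPU f) :
    star f * p = fpt p f * star f := by
  have h1 : p * f = f * fpt p f := (mul_fpt hp.1 hf).symm
  have h2 := congrArg star h1
  rw [star_mul, star_mul, star_self_of_le_one hp.1,
    star_self_of_le_one (fpt_le_one p f)] at h2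
  exact h2

lemma compatInv {p f f' : Q} (hp : IsPrimeE p) (hf : IsPU f) (hf' : IsPU f')
    (hdf : ¬ f * star f ≤ p) (hdf' : ¬ f' * star f' ≤ p)
    (hinc : Incident p f f') : Incident (fpt p f) (star f) (star f') := by
  have hfpt : fpt p f = fpt p f' := fpt_eq_of_incident hp hf hf' hdf hdf' hinc
  obtain ⟨h, hhd, hhp, hff'⟩ := hinc
  have hhd1 : h ≤ f * star f := le_trans hhd inf_le_left
  have hh1 : h ≤ 1 := le_trans hhd1 hf.2
  have hconj1 : star f * h * f ≤ 1 := by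
    have := conj_le_one (pu_star hf) hh1
    rwa [star_star] at this
  set h5 := (star f * h * f) ⊓ (star f * f) ⊓ (star f' * f') with h5def
  have h5le1 : h5 ≤ 1 := le_trans (le_trans inf_le_left inf_le_right) hf.1
  refine ⟨h5, ?_, ?_, ?_⟩
  · apply le_inf
    · rw [star_star]
      exact le_trans inf_le_left inf_le_right
    · rw [star_star]
      exact inf_le_right
  · intro hle
    have hn1 : ¬ star f * h * f ≤ fpt p f := by
      intro hle1
      apply hhp
      have := (le_fpt_iff hp.1 hf hconj1).1 hle1
      have e : f * (star f * h * f) * star f = (f * star f) * h * (f * star f) := by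
        simp [_root_.mul_assoc]
      rw [e, mul_mul_self_sub hf.2 hh1, inf_comm, inf_eq_left.2 hhd1] at this
      exact this
    have hn2 : ¬ star f * f ≤ fpt p f := r_not_le_fpt hp.1 hf hdf
    have hn3 : ¬ star f' * f' ≤ fpt p f := by
      rw [hfpt]; exact r_not_le_fpt hp.1 hf' hdf'
    have hstep : (star f * h * f) ⊓ (star f * f) ≤ 1 := le_trans inf_le_left hconj1
    rcases (fpt_prime hp hf hdf).2.2 ((star f * h * f) ⊓ (star f * f)) (star f' * f')
        hstep hf'.1 hle with h1 | h1
    · rcases (fpt_prime hp hf hdf).2.2 _ _ hconj1 hf.1 h1 with h2 | h2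
      · exact hn1 h2
      · exact hn2 h2
    · exact hn3 h1
  · have hid : h5 * h5 = h5 := idem_of_le_one h5le1
    have hstep1 : (star f * h * f) * star f = star f * h := by
      calc (star f * h * f) * star f = star f * (h * (f * star f)) := by
            simp [_root_.mul_assoc]
        _ = star f * (h ⊓ (f * star f)) := by rw [mul_eq_inf hh1 hf.2]
        _ = star f * h := by rw [inf_eq_left.2 hhd1]
    have hstar_h : star f * h ≤ star f * p ⊔ star f' := by
      have h3 := star_mono hff'
      rw [star_sup, star_mul, star_mul, star_self_of_le_one hh1,
        star_self_of_le_one hp.1] at h3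
      exact h3
    have hterm1 : (star f' * f') * (star f * p) ≤ fpt p f * star f := by
      calc (star f' * f') * (star f * p) = (star f' * f') * (fpt p f * star f) := by
            rw [star_mul_p hp hf]
        _ = ((star f' * f') * fpt p f) * star f := (_root_.mul_assoc _ _ _).symm
        _ = (fpt p f * (star f' * f')) * star f := by
            rw [mul_comm_sub hf'.1 (fpt_le_one p f)]
        _ ≤ (fpt p f * 1) * star f := mul_le_mul (mul_le_mul le_rfl hf'.1) le_rfl
        _ = fpt p f * star f := by rw [mul_one]
    calc h5 * star f = (h5 * h5) * star f := by rw [hid]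
      _ ≤ ((star f' * f') * (star f * h * f)) * star f :=
          mul_le_mul (mul_le_mul inf_le_right (le_trans inf_le_left inf_le_left)) le_rfl
      _ = (star f' * f') * ((star f * h * f) * star f) := _root_.mul_assoc _ _ _
      _ = (star f' * f') * (star f * h) := by rw [hstep1]
      _ ≤ (star f' * f') * (star f * p ⊔ star f') := mul_le_mul le_rfl hstar_h
      _ = (star f' * f') * (star f * p) ⊔ (star f' * f') * star f' := mul_sup _ _ _
      _ ≤ fpt p f * star f ⊔ star f' := by
          apply sup_le
          · exact le_trans hterm1 le_sup_left
          · have : (star f' * f') * star f' ≤ star f' := by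
              calc (star f' * f') * star f' ≤ 1 * star f' := mul_le_mul hf'.1 le_rfl
                _ = star f' := one_mul _
            exact le_trans this le_sup_right

end SGFaux

/-- The incidence domain: pairs `(p, f)` with `p` prime in `Q_e`, `f` a partial unit,
and `d(f) = f f* ≰ p`. -/
def IncDom (Q : Type*) [SGFQuantale Q] :=
  {pf : Q × Q // IsPrimeE pf.1 ∧ IsPU pf.2 ∧ ¬ pf.2 * star pf.2 ≤ pf.1}

/-- The incidence relation on the incidence domain. -/
def IncRel (Q : Type*) [SGFQuantale Q] (a b : IncDom Q) : Prop :=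
  a.1.1 = b.1.1 ∧ Incident a.1.1 a.1.2 b.1.2

/-- A set groupoid, with total multiplication; axioms involving `mul x y` are
conditional on `r x = d y`. -/
structure SetGroupoid (G₀ : Type*) (G₁ : Type*) where
  d : G₁ → G₀
  r : G₁ → G₀
  u : G₀ → G₁
  mul : G₁ → G₁ → G₁
  inv : G₁ → G₁
  d_u : ∀ p, d (u p) = p
  r_u : ∀ p, r (u p) = p
  d_mul : ∀ x y, r x = d y → d (mul x y) = d x
  r_mul : ∀ x y, r x = d y → r (mul x y) = r y
  mul_assoc : ∀ x y z, r x = d y → r y = d z → mul (mul x y) z = mul x (mul y z)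
  mul_u : ∀ x, mul x (u (r x)) = x
  u_mul : ∀ x, mul (u (d x)) x = x
  mul_inv : ∀ x, mul x (inv x) = u (d x)
  inv_mul : ∀ x, mul (inv x) x = u (r x)
  d_inv : ∀ x, d (inv x) = r x
  r_inv : ∀ x, r (inv x) = d x

namespace SGFaux
variable {Q : Type*} [SGFQuantale Q]

lemma fpt_one {p : Q} (hp : IsPrimeE p) : fpt p 1 = p := by
  apply fpt_unique hp pu_one ?_ hp ?_
  · intro h
    rw [star_one, mul_one] at h
    exact hp.2.1 (le_antisymm hp.1 h)
  · rw [mul_one, one_mul]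

lemma fpt_star {p f : Q} (hp : IsPrimeE p) (hf : IsPU f) (hdf : ¬ f * star f ≤ p) :
    fpt (fpt p f) (star f) = p := by
  apply fpt_unique (fpt_prime hp hf hdf) (pu_star hf) ?_ hp ?_
  · rw [star_star]
    exact r_not_le_fpt hp.1 hf hdf
  · exact (star_mul_p hp hf).symm

lemma inc_sub_one {p a : Q} (ha : a ≤ 1) (hap : ¬ a ≤ p) : Incident p a 1 := by
  have hsa : star a = a := star_self_of_le_one ha
  have hda : a * star a = a := by rw [hsa, idem_of_le_one ha]
  refine ⟨a, ?_, hap, ?_⟩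
  · apply le_inf
    · rw [hda]
    · rw [star_one, mul_one]; exact ha
  · rw [idem_of_le_one ha]
    exact le_trans ha le_sup_right

/-- the incidence relation preserves the image point. -/
lemma incRel_fpt {x y : IncDom Q} (h : IncRel Q x y) :
    fpt x.1.1 x.1.2 = fpt y.1.1 y.1.2 := by
  obtain ⟨h1, h2⟩ := h
  have := fpt_eq_of_incident x.2.1 x.2.2.1 y.2.2.1 x.2.2.2 (by rw [h1]; exact y.2.2.2) h2
  rw [this, h1]

def dmapF (x : IncDom Q) : {p : Q // IsPrimeE p} := ⟨x.1.1, x.2.1⟩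

def rmapF (x : IncDom Q) : {p : Q // IsPrimeE p} :=
  ⟨fpt x.1.1 x.1.2, fpt_prime x.2.1 x.2.2.1 x.2.2.2⟩

def puF (p : {p : Q // IsPrimeE p}) : IncDom Q :=
  ⟨(p.1, 1), p.2, pu_one, by
    rw [star_one, mul_one]
    intro h
    exact p.2.2.1 (le_antisymm p.2.1 h)⟩

open Classical in
noncomputable def pmul (x y : IncDom Q) : IncDom Q :=
  if H : fpt x.1.1 x.1.2 = y.1.1 then
    ⟨(x.1.1, x.1.2 * y.1.2), x.2.1, pu_mul x.2.2.1 y.2.2.1,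
      d_mul_not_le x.2.1 x.2.2.1 y.2.2.1 x.2.2.2 (by rw [H]; exact y.2.2.2)⟩
  else x

lemma pmul_eq {x y : IncDom Q} (H : fpt x.1.1 x.1.2 = y.1.1) :
    (pmul x y).1 = (x.1.1, x.1.2 * y.1.2) := by
  rw [pmul]
  exact congrArg Subtype.val (dif_pos H)

lemma pmul_ne {x y : IncDom Q} (H : ¬ fpt x.1.1 x.1.2 = y.1.1) :
    pmul x y = x := by
  rw [pmul]
  exact dif_neg H

def pinv (x : IncDom Q) : IncDom Q :=
  ⟨(fpt x.1.1 x.1.2, star x.1.2), fpt_prime x.2.1 x.2.2.1 x.2.2.2, pu_star x.2.2.1, by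
    rw [star_star]
    exact r_not_le_fpt x.2.1.1 x.2.2.1 x.2.2.2⟩

def Gd : Quot (IncRel Q) → {p : Q // IsPrimeE p} :=
  Quot.lift dmapF (fun _ _ h => Subtype.ext h.1)

def Gr : Quot (IncRel Q) → {p : Q // IsPrimeE p} :=
  Quot.lift rmapF (fun _ _ h => Subtype.ext (incRel_fpt h))

def Gu (p : {p : Q // IsPrimeE p}) : Quot (IncRel Q) := Quot.mk _ (puF p)

noncomputable def Ginv : Quot (IncRel Q) → Quot (IncRel Q) :=
  Quot.lift (fun x => Quot.mk _ (pinv x)) (fun a b h => by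
    apply Quot.sound
    exact ⟨incRel_fpt h,
      compatInv a.2.1 a.2.2.1 b.2.2.1 a.2.2.2 (by rw [h.1]; exact b.2.2.2) h.2⟩)

noncomputable def Gmul : Quot (IncRel Q) → Quot (IncRel Q) → Quot (IncRel Q) :=
  Quot.lift₂ (fun x y => Quot.mk _ (pmul x y))
    (fun a b₁ b₂ h => by
      by_cases H : fpt a.1.1 a.1.2 = b₁.1.1
      · have H2 : fpt a.1.1 a.1.2 = b₂.1.1 := by rw [H, h.1]
        apply Quot.sound
        refine ⟨?_, ?_⟩
        · rw [pmul_eq H, pmul_eq H2]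
        · have e1 := pmul_eq H
          have e2 := pmul_eq H2
          have c1 : (pmul a b₁).1.1 = a.1.1 := by rw [e1]
          have c2 : (pmul a b₁).1.2 = a.1.2 * b₁.1.2 := by rw [e1]
          have c4 : (pmul a b₂).1.2 = a.1.2 * b₂.1.2 := by rw [e2]
          rw [c1, c2, c4]
          exact compatB a.2.1 a.2.2.1 b₁.2.2.1 b₂.2.2.1 a.2.2.2
            (by rw [H]; exact h.2)
      · have H2 : ¬ fpt a.1.1 a.1.2 = b₂.1.1 := by rw [h.1] at H; exact H
        show Quot.mk (IncRel Q) (pmul a b₁) = Quot.mk (IncRel Q) (pmul a b₂)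
        rw [pmul_ne H, pmul_ne H2])
    (fun a₁ a₂ b h => by
      have hfpt := incRel_fpt h
      by_cases H : fpt a₁.1.1 a₁.1.2 = b.1.1
      · have H2 : fpt a₂.1.1 a₂.1.2 = b.1.1 := by rw [← hfpt]; exact H
        apply Quot.sound
        refine ⟨?_, ?_⟩
        · rw [pmul_eq H, pmul_eq H2]; exact h.1
        · have c1 : (pmul a₁ b).1.1 = a₁.1.1 := by rw [pmul_eq H]
          have c2 : (pmul a₁ b).1.2 = a₁.1.2 * b.1.2 := by rw [pmul_eq H]
          have c4 : (pmul a₂ b).1.2 = a₂.1.2 * b.1.2 := by rw [pmul_eq H2]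
          rw [c1, c2, c4]
          apply compatA a₁.2.1 a₁.2.2.1 a₂.2.2.1 b.2.2.1 a₁.2.2.2
            (by rw [h.1]; exact a₂.2.2.2) (by rw [H]; exact b.2.2.2) ?_ h.2
          rw [h.1, ← hfpt, H]
          exact b.2.2.2
      · have H2 : ¬ fpt a₂.1.1 a₂.1.2 = b.1.1 := by rw [← hfpt]; exact H
        show Quot.mk (IncRel Q) (pmul a₁ b) = Quot.mk (IncRel Q) (pmul a₂ b)
        rw [pmul_ne H, pmul_ne H2]
        exact Quot.sound h)

end SGFaux

namespace SGFaux
variable {Q : Type*} [SGFQuantale Q]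

lemma fpt_pmul {x y : IncDom Q} (H : fpt x.1.1 x.1.2 = y.1.1) :
    fpt (pmul x y).1.1 (pmul x y).1.2 = fpt y.1.1 y.1.2 := by
  have c1 : (pmul x y).1.1 = x.1.1 := by rw [pmul_eq H]
  have c2 : (pmul x y).1.2 = x.1.2 * y.1.2 := by rw [pmul_eq H]
  rw [c1, c2, fpt_mul x.2.1 x.2.2.1 y.2.2.1 x.2.2.2 (by rw [H]; exact y.2.2.2), H]

noncomputable def theGroupoid (Q : Type*) [SGFQuantale Q] :
    SetGroupoid {p : Q // IsPrimeE p} (Quot (IncRel Q)) where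
  d := Gd
  r := Gr
  u := Gu
  mul := Gmul
  inv := Ginv
  d_u := fun p => rfl
  r_u := fun p => Subtype.ext (fpt_one p.2)
  d_mul := by
    intro X Y
    induction X using Quot.ind with | _ x =>
    induction Y using Quot.ind with | _ y =>
    intro hxy
    have H : fpt x.1.1 x.1.2 = y.1.1 := congrArg Subtype.val hxy
    apply Subtype.ext
    show (pmul x y).1.1 = x.1.1
    rw [pmul_eq H]
  r_mul := by
    intro X Y
    induction X using Quot.ind with | _ x =>
    induction Y using Quot.ind with | _ y =>
    intro hxy
    have H : fpt x.1.1 x.1.2 = y.1.1 := congrArg Subtype.val hxy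
    apply Subtype.ext
    show fpt (pmul x y).1.1 (pmul x y).1.2 = fpt y.1.1 y.1.2
    exact fpt_pmul H
  mul_assoc := by
    intro X Y Z
    induction X using Quot.ind with | _ x =>
    induction Y using Quot.ind with | _ y =>
    induction Z using Quot.ind with | _ z =>
    intro hxy hyz
    have H1 : fpt x.1.1 x.1.2 = y.1.1 := congrArg Subtype.val hxy
    have H2 : fpt y.1.1 y.1.2 = z.1.1 := congrArg Subtype.val hyz
    show Quot.mk _ (pmul (pmul x y) z) = Quot.mk _ (pmul x (pmul y z))
    apply congrArg
    have c1 : (pmul x y).1.1 = x.1.1 := by rw [pmul_eq H1]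
    have c2 : (pmul x y).1.2 = x.1.2 * y.1.2 := by rw [pmul_eq H1]
    have c3 : (pmul y z).1.1 = y.1.1 := by rw [pmul_eq H2]
    have c4 : (pmul y z).1.2 = y.1.2 * z.1.2 := by rw [pmul_eq H2]
    have H3 : fpt (pmul x y).1.1 (pmul x y).1.2 = z.1.1 := by
      rw [fpt_pmul H1, H2]
    have H4 : fpt x.1.1 x.1.2 = (pmul y z).1.1 := by rw [c3]; exact H1
    apply Subtype.ext
    rw [pmul_eq H3, pmul_eq H4, c1, c2, c4, _root_.mul_assoc]
  mul_u := by
    intro X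
    induction X using Quot.ind with | _ x =>
    show Quot.mk _ (pmul x (puF (rmapF x))) = Quot.mk _ x
    apply congrArg
    apply Subtype.ext
    have H : fpt x.1.1 x.1.2 = (puF (rmapF x)).1.1 := rfl
    rw [pmul_eq H]
    show (x.1.1, x.1.2 * 1) = x.1
    rw [mul_one]
  u_mul := by
    intro X
    induction X using Quot.ind with | _ x =>
    show Quot.mk _ (pmul (puF (dmapF x)) x) = Quot.mk _ x
    apply congrArg
    apply Subtype.ext
    have H : fpt (puF (dmapF x)).1.1 (puF (dmapF x)).1.2 = x.1.1 := fpt_one x.2.1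
    rw [pmul_eq H]
    show (x.1.1, 1 * x.1.2) = x.1
    rw [one_mul]
  mul_inv := by
    intro X
    induction X using Quot.ind with | _ x =>
    show Quot.mk _ (pmul x (pinv x)) = Quot.mk _ (puF (dmapF x))
    apply Quot.sound
    have H : fpt x.1.1 x.1.2 = (pinv x).1.1 := rfl
    have c1 : (pmul x (pinv x)).1.1 = x.1.1 := by rw [pmul_eq H]
    have c2 : (pmul x (pinv x)).1.2 = x.1.2 * star x.1.2 := by rw [pmul_eq H]; rfl
    constructor
    · rw [c1]; rfl
    · rw [c1, c2]
      exact inc_sub_one x.2.2.1.2 x.2.2.2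
  inv_mul := by
    intro X
    induction X using Quot.ind with | _ x =>
    show Quot.mk _ (pmul (pinv x) x) = Quot.mk _ (puF (rmapF x))
    apply Quot.sound
    have H : fpt (pinv x).1.1 (pinv x).1.2 = x.1.1 :=
      fpt_star x.2.1 x.2.2.1 x.2.2.2
    have c1 : (pmul (pinv x) x).1.1 = fpt x.1.1 x.1.2 := by rw [pmul_eq H]; rfl
    have c2 : (pmul (pinv x) x).1.2 = star x.1.2 * x.1.2 := by rw [pmul_eq H]; rfl
    constructor
    · rw [c1]; rfl
    · rw [c1, c2]
      exact inc_sub_one x.2.2.1.1 (r_not_le_fpt x.2.1.1 x.2.2.1 x.2.2.2)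
  d_inv := by
    intro X
    induction X using Quot.ind with | _ x =>
    rfl
  r_inv := by
    intro X
    induction X using Quot.ind with | _ x =>
    exact Subtype.ext (fpt_star x.2.1 x.2.2.1 x.2.2.2)

end SGFaux

/-- For every SGF-quantale `Q`, the quotient of the incidence domain by the
incidence relation carries a set groupoid structure with units the primes of
`Q_e`, and structure maps `d [p,f] = p`, `r [p,f] = f[p]`, `u p = [p,e]`,
`[p,f]·[f[p],g] = [p, f g]` and `[p,f]⁻¹ = [f[p], f*]`. -/
theorem stmt17 (Q : Type*) [SGFQuantale Q] :
    ∃ G : SetGroupoid {p : Q // IsPrimeE p} (Quot (IncRel Q)),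
      (∀ x : IncDom Q, (G.d (Quot.mk (IncRel Q) x)).1 = x.1.1) ∧
      (∀ (x : IncDom Q) (q : Q), IsPrimeE q → ¬ star x.1.2 * x.1.2 ≤ q →
          x.1.1 * x.1.2 = x.1.2 * q →
          (G.r (Quot.mk (IncRel Q) x)).1 = q) ∧
      (∀ (p : {p : Q // IsPrimeE p}) (x : IncDom Q), x.1 = (p.1, 1) →
          G.u p = Quot.mk (IncRel Q) x) ∧
      (∀ x y z : IncDom Q, x.1.1 * x.1.2 = x.1.2 * y.1.1 →
          z.1 = (x.1.1, x.1.2 * y.1.2) →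
          G.mul (Quot.mk (IncRel Q) x) (Quot.mk (IncRel Q) y) = Quot.mk (IncRel Q) z) ∧
      (∀ x z : IncDom Q, x.1.1 * x.1.2 = x.1.2 * z.1.1 → z.1.2 = star x.1.2 →
          G.inv (Quot.mk (IncRel Q) x) = Quot.mk (IncRel Q) z) := by
  refine ⟨SGFaux.theGroupoid Q, ?_, ?_, ?_, ?_, ?_⟩
  · intro x; rfl
  · intro x q hq _ heq
    show SGFaux.fpt x.1.1 x.1.2 = q
    exact SGFaux.fpt_unique x.2.1 x.2.2.1 x.2.2.2 hq heq
  · intro p x hx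
    show Quot.mk _ (SGFaux.puF p) = Quot.mk _ x
    apply congrArg
    apply Subtype.ext
    exact hx.symm
  · intro x y z heq hz
    have H : SGFaux.fpt x.1.1 x.1.2 = y.1.1 :=
      SGFaux.fpt_unique x.2.1 x.2.2.1 x.2.2.2 y.2.1 heq
    show Quot.mk _ (SGFaux.pmul x y) = Quot.mk _ z
    apply congrArg
    apply Subtype.ext
    rw [SGFaux.pmul_eq H, hz]
  · intro x z heq hzf
    have H : SGFaux.fpt x.1.1 x.1.2 = z.1.1 :=
      SGFaux.fpt_unique x.2.1 x.2.2.1 x.2.2.2 z.2.1 heq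
    show Quot.mk _ (SGFaux.pinv x) = Quot.mk _ z
    apply congrArg
    apply Subtype.ext
    show (SGFaux.fpt x.1.1 x.1.2, star x.1.2) = z.1
    rw [H, ← hzf]
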